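/- Rotation preserving observed loadings (IO can be imposed without loss of generality): let f_t = (g_t', h_t')' ∈ R^{r_1+r_2} for t=1,…,T with positive definite sample covariance M_{ff}, let Γ be an m×(r_1+r_2) loading matrix whose y-equation rows are λ_i = (ψ_i', φ_i')' with the φ_i block OBSERVED, and let Σ be m×m symmetric positive definite; assume the relevant symmetric matrix below has distinct eigenvalues. Then there exists an invertible (r_1+r_2)×(r_1+r_2) matrix A such that, setting Γ^⋆ = Γ A^{-1} and f_t^⋆ = A(f_t − f̄) with blocks (g_t^⋆, h_t^⋆), one has: (i) Γ f_t = Γ f̄ + Γ^⋆ f_t^⋆; (ii) the observed loading block Φ is left unchanged by the transformation; (iii) T^{-1}Σ_t g_t^⋆ = 0, T^{-1}Σ_t h_t^⋆ = 0, T^{-1}Σ_t g_t^⋆ g_t^{⋆'} = I_{r_1}, and T^{-1}Σ_t g_t^⋆ h_t^{⋆'} = 0; and (iv) m^{-1}Γ^{g⋆'}Σ^{-1}Γ^{g⋆} is diagonal with distinct descending diagonal entries. -/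

import Mathlib

/-!
STATEMENT 15: Rotation preserving observed loadings (IO can be imposed without loss
of generality).  For factors f_t = (g_t', h_t')' ∈ ℝ^{r₁+r₂} with positive definite
sample covariance and an m×(r₁+r₂) loading matrix Γ whose h-columns contain the
OBSERVED loadings, there is an invertible A such that Γ⋆ = Γ A⁻¹ and
f⋆_t = A(f_t − f̄) satisfy: (i) Γ f_t = Γ f̄ + Γ⋆ f⋆_t; (ii) the observed h-loading
block is left unchanged; (iii) the transformed g- and h-factors have zero sample
means, the g-factors have identity sample covariance and zero sample covariance with
the h-factors; (iv) m⁻¹Γ^{g⋆}'Σ⁻¹Γ^{g⋆} is diagonal with distinct descending entries.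
The genericity assumption is expressed as the existence of a spectral decomposition
with strictly descending eigenvalues for the explicit matrix arising in the
construction.
-/

open Matrix BigOperators

noncomputable section

/-- Sample mean of the factors. -/
def fbar {T r : ℕ} (f : Fin T → Fin r → ℝ) : Fin r → ℝ :=
  (T : ℝ)⁻¹ • ∑ t, f t

/-- Sample covariance matrix `M_ff` of the factors. -/
def Mff {T r : ℕ} (f : Fin T → Fin r → ℝ) : Matrix (Fin r) (Fin r) ℝ :=
  (T : ℝ)⁻¹ • ∑ t, Matrix.of fun a b => (f t a - fbar f a) * (f t b - fbar f b)

/-- Diagonal with distinct diagonal entries arranged in descending order. -/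
def DiagDistinctDesc {n : ℕ} (A : Matrix (Fin n) (Fin n) ℝ) : Prop :=
  ∃ d : Fin n → ℝ, (∀ a b : Fin n, a < b → d b < d a) ∧ A = Matrix.diagonal d

/-- Spectral decomposition with strictly descending (hence distinct) eigenvalues;
for a symmetric matrix this says exactly that all eigenvalues are distinct. -/
def HasDistinctEigen {n : ℕ} (A : Matrix (Fin n) (Fin n) ℝ) : Prop :=
  ∃ (U : Matrix (Fin n) (Fin n) ℝ) (d : Fin n → ℝ),
    U * Uᵀ = 1 ∧ Uᵀ * U = 1 ∧ (∀ a b : Fin n, a < b → d b < d a) ∧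
    A = U * Matrix.diagonal d * Uᵀ

/-- The positive semidefinite square root of a positive semidefinite matrix
(the former `Matrix.PosSemidef.sqrt`, removed from Mathlib). -/
def posSemidefSqrt {n : Type*} [Fintype n] [DecidableEq n]
    {A : Matrix n n ℝ} (hA : A.PosSemidef) : Matrix n n ℝ :=
  hA.1.eigenvectorUnitary.1 * diagonal (fun i => (hA.1.eigenvalues i).sqrt) *
  (star hA.1.eigenvectorUnitary : Matrix n n ℝ)

section

variable {T r₁ r₂ : ℕ} (f : Fin T → Fin (r₁ + r₂) → ℝ)

/-- `M_gg` block of the sample covariance. -/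
def Mgg : Matrix (Fin r₁) (Fin r₁) ℝ :=
  (Mff f).submatrix (Fin.castAdd r₂) (Fin.castAdd r₂)

/-- `M_hg` block of the sample covariance. -/
def Mhg : Matrix (Fin r₂) (Fin r₁) ℝ :=
  (Mff f).submatrix (Fin.natAdd r₁) (Fin.castAdd r₂)

end

/-- conjugating a rank-one "outer product" matrix. -/
lemma outer_conj {p q : Type*} [Fintype p] [Fintype q] (A : Matrix p q ℝ) (x : q → ℝ) :
    A * Matrix.of (fun a b => x a * x b) * Aᵀ =
      Matrix.of (fun a b => A.mulVec x a * A.mulVec x b) := by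
  ext a b
  simp only [Matrix.mul_apply, Matrix.of_apply, Matrix.transpose_apply, Matrix.mulVec,
    dotProduct]
  rw [Finset.sum_mul_sum, Finset.sum_comm]
  refine Finset.sum_congr rfl fun k _ => ?_
  rw [Finset.sum_mul]
  exact Finset.sum_congr rfl fun j _ => by ring

lemma posSemidefSqrt_mul_self {n : Type*} [Fintype n] [DecidableEq n]
    {A : Matrix n n ℝ} (hA : A.PosSemidef) : posSemidefSqrt hA * posSemidefSqrt hA = A := by
  have hVV : (star hA.1.eigenvectorUnitary : Matrix n n ℝ) * hA.1.eigenvectorUnitary.1 = 1 :=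
    Unitary.coe_star_mul_self _
  conv_rhs => rw [hA.1.spectral_theorem, Unitary.conjStarAlgAut_apply]
  unfold posSemidefSqrt
  calc _ = hA.1.eigenvectorUnitary.1 * (diagonal (fun i => (hA.1.eigenvalues i).sqrt) *
        ((star hA.1.eigenvectorUnitary : Matrix n n ℝ) * hA.1.eigenvectorUnitary.1) *
        diagonal (fun i => (hA.1.eigenvalues i).sqrt)) *
        (star hA.1.eigenvectorUnitary : Matrix n n ℝ) := by simp only [Matrix.mul_assoc]
    _ = _ := by
      rw [hVV, Matrix.mul_one, diagonal_mul_diagonal]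
      congr 3
      funext i
      simp [Real.mul_self_sqrt (hA.eigenvalues_nonneg i)]

lemma posSemidefSqrt_transpose {n : Type*} [Fintype n] [DecidableEq n]
    {A : Matrix n n ℝ} (hA : A.PosSemidef) : (posSemidefSqrt hA)ᵀ = posSemidefSqrt hA := by
  unfold posSemidefSqrt
  simp [Matrix.transpose_mul, Matrix.star_eq_conjTranspose,
    Matrix.conjTranspose_eq_transpose_of_trivial, Matrix.mul_assoc]

theorem stmt15 {T m r₁ r₂ : ℕ} (f : Fin T → Fin (r₁ + r₂) → ℝ)
    (Γ : Matrix (Fin m) (Fin (r₁ + r₂)) ℝ) (Sg : Matrix (Fin m) (Fin m) ℝ)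
    (hSg : Sg.PosDef) (hM : (Mff f).PosDef) (hMgg : (Mgg f).PosDef)
    -- genericity: the matrix to be diagonalized in the construction has distinct
    -- eigenvalues, where `Γ^{g(0)} = Γ^g M_gg^{1/2} + Γ^h M_hg M_gg^{-1/2}`
    (hg : HasDistinctEigen ((m : ℝ)⁻¹ •
      (Γ.submatrix id (Fin.castAdd r₂) * posSemidefSqrt hMgg.posSemidef +
        Γ.submatrix id (Fin.natAdd r₁) * Mhg f * (posSemidefSqrt hMgg.posSemidef)⁻¹)ᵀ * Sg⁻¹ *
      (Γ.submatrix id (Fin.castAdd r₂) * posSemidefSqrt hMgg.posSemidef +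
        Γ.submatrix id (Fin.natAdd r₁) * Mhg f * (posSemidefSqrt hMgg.posSemidef)⁻¹))) :
    ∃ A : Matrix (Fin (r₁ + r₂)) (Fin (r₁ + r₂)) ℝ, IsUnit A.det ∧
      -- (i) the common component is unchanged
      (∀ t, Γ.mulVec (f t) =
        Γ.mulVec (fbar f) + (Γ * A⁻¹).mulVec (A.mulVec (f t - fbar f))) ∧
      -- (ii) the observed h-loading block (in particular Φ) is untransformed
      (∀ (i : Fin m) (a : Fin r₂),
        (Γ * A⁻¹) i (Fin.natAdd r₁ a) = Γ i (Fin.natAdd r₁ a)) ∧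
      -- (iii) zero sample means, identity sample covariance of g⋆,
      -- and zero sample cross-covariance of g⋆ with h⋆
      (∑ t, (fun a : Fin r₁ => A.mulVec (f t - fbar f) (Fin.castAdd r₂ a))) = 0 ∧
      (∑ t, (fun a : Fin r₂ => A.mulVec (f t - fbar f) (Fin.natAdd r₁ a))) = 0 ∧
      ((T : ℝ)⁻¹ • ∑ t, Matrix.of (fun a b : Fin r₁ =>
          A.mulVec (f t - fbar f) (Fin.castAdd r₂ a) *
          A.mulVec (f t - fbar f) (Fin.castAdd r₂ b))
        = (1 : Matrix (Fin r₁) (Fin r₁) ℝ)) ∧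
      ((T : ℝ)⁻¹ • ∑ t, Matrix.of (fun (a : Fin r₁) (b : Fin r₂) =>
          A.mulVec (f t - fbar f) (Fin.castAdd r₂ a) *
          A.mulVec (f t - fbar f) (Fin.natAdd r₁ b))
        = (0 : Matrix (Fin r₁) (Fin r₂) ℝ)) ∧
      -- (iv) the IO diagonality normalization for the new g-loadings
      DiagDistinctDesc ((m : ℝ)⁻¹ •
        ((Γ * A⁻¹).submatrix id (Fin.castAdd r₂))ᵀ * Sg⁻¹ *
          ((Γ * A⁻¹).submatrix id (Fin.castAdd r₂))) := by
  classical
  set S : Matrix (Fin r₁) (Fin r₁) ℝ := posSemidefSqrt hMgg.posSemidef with hSdef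
  obtain ⟨U, d, hUU, hU'U, hd, hEig⟩ := hg
  have hS2 : S * S = Mgg f := posSemidefSqrt_mul_self hMgg.posSemidef
  have hSherm : Sᵀ = S := by
    have h := posSemidefSqrt_transpose hMgg.posSemidef
    ext a b
    simpa using congrFun (congrFun h a) b
  have hMggSym : (Mgg f)ᵀ = Mgg f := by
    have h := hMgg.1
    ext a b
    simpa using congrFun (congrFun h a) b
  have hMffSym : ∀ x y, Mff f x y = Mff f y x := by
    intro x y
    simp [Mff, Matrix.smul_apply, Matrix.sum_apply, mul_comm]
  have hdetMgg : IsUnit (Mgg f).det := hMgg.det_pos.ne'.isUnit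
  have hdetS : IsUnit S.det := by
    have h : S.det * S.det = (Mgg f).det := by rw [← Matrix.det_mul, hS2]
    exact isUnit_of_mul_isUnit_left (h ▸ hdetMgg)
  have hSS' : S * S⁻¹ = 1 := Matrix.mul_nonsing_inv _ hdetS
  have hS'S : S⁻¹ * S = 1 := Matrix.nonsing_inv_mul _ hdetS
  have hGG' : Mgg f * (Mgg f)⁻¹ = 1 := Matrix.mul_nonsing_inv _ hdetMgg
  have hSinvT : (S⁻¹)ᵀ = S⁻¹ := by rw [Matrix.transpose_nonsing_inv, hSherm]
  have hGinvS : (Mgg f)⁻¹ * S = S⁻¹ := by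
    rw [← hS2, Matrix.mul_inv_rev, Matrix.mul_assoc, hS'S, Matrix.mul_one]
  -- the blocks of the rotation and its inverse
  set P : Matrix (Fin r₁) (Fin r₁) ℝ := Uᵀ * S⁻¹ with hPdef
  set Q : Matrix (Fin r₂) (Fin r₁) ℝ := -(Mhg f * (Mgg f)⁻¹) with hQdef
  set R : Matrix (Fin r₂) (Fin r₁) ℝ := Mhg f * (Mgg f)⁻¹ * (S * U) with hRdef
  set e : Fin r₁ ⊕ Fin r₂ ≃ Fin (r₁ + r₂) := finSumFinEquiv with hedef
  set B : Matrix (Fin r₁ ⊕ Fin r₂) (Fin r₁ ⊕ Fin r₂) ℝ :=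
    Matrix.fromBlocks P 0 Q 1 with hBdef
  set B' : Matrix (Fin r₁ ⊕ Fin r₂) (Fin r₁ ⊕ Fin r₂) ℝ :=
    Matrix.fromBlocks (S * U) 0 R 1 with hB'def
  set A : Matrix (Fin (r₁ + r₂)) (Fin (r₁ + r₂)) ℝ := B.submatrix ⇑e.symm ⇑e.symm with hAdef
  set A' : Matrix (Fin (r₁ + r₂)) (Fin (r₁ + r₂)) ℝ := B'.submatrix ⇑e.symm ⇑e.symm with hA'def
  have hP_SU : P * (S * U) = 1 := by
    rw [hPdef, Matrix.mul_assoc, ← Matrix.mul_assoc S⁻¹ S U, hS'S, Matrix.one_mul, hU'U]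
  have hSU_P : (S * U) * P = 1 := by
    rw [hPdef, Matrix.mul_assoc, ← Matrix.mul_assoc U Uᵀ S⁻¹, hUU, Matrix.one_mul, hSS']
  have hBB' : B * B' = 1 := by
    rw [hBdef, hB'def, Matrix.fromBlocks_multiply]
    simp only [Matrix.zero_mul, Matrix.mul_zero, add_zero, zero_add, Matrix.mul_one,
      Matrix.one_mul]
    rw [hP_SU, show Q * (S * U) + R = 0 by rw [hQdef, Matrix.neg_mul, hRdef, neg_add_cancel],
      Matrix.fromBlocks_one]
  have hB'B : B' * B = 1 := by
    rw [hBdef, hB'def, Matrix.fromBlocks_multiply]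
    simp only [Matrix.zero_mul, Matrix.mul_zero, add_zero, zero_add, Matrix.mul_one,
      Matrix.one_mul]
    rw [hSU_P, show R * P + Q = 0 by
      rw [hRdef, Matrix.mul_assoc, hSU_P, Matrix.mul_one, hQdef, add_neg_cancel],
      Matrix.fromBlocks_one]
  have hAA' : A * A' = 1 := by
    rw [hAdef, hA'def, Matrix.submatrix_mul_equiv B B' _ e.symm _, hBB',
      Matrix.submatrix_one_equiv]
  have hA'A : A' * A = 1 := by
    rw [hAdef, hA'def, Matrix.submatrix_mul_equiv B' B _ e.symm _, hB'B,
      Matrix.submatrix_one_equiv]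
  have hAinv : A⁻¹ = A' := Matrix.inv_eq_right_inv hAA'
  have hdetA : IsUnit A.det := Matrix.isUnit_det_of_right_inverse hAA'
  -- rewriting Γ * A⁻¹
  have hΓrw : Γ * A⁻¹ = ((Γ.submatrix id ⇑e) * B').submatrix id ⇑e.symm := by
    rw [hAinv, hA'def]
    have hΓ : Γ = (Γ.submatrix id ⇑e).submatrix id ⇑e.symm := by
      rw [Matrix.submatrix_submatrix]
      simp
    conv_lhs => rw [hΓ]
    rw [Matrix.submatrix_mul_equiv (Γ.submatrix id ⇑e) B' id e.symm ⇑e.symm]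
  -- centering
  have hcenter : ∑ t, (f t - fbar f) = (0 : Fin (r₁ + r₂) → ℝ) := by
    rcases Nat.eq_zero_or_pos T with hT | hT
    · subst hT; simp
    · have hT' : (T : ℝ) ≠ 0 := Nat.cast_ne_zero.mpr hT.ne'
      rw [Finset.sum_sub_distrib, fbar, Finset.sum_const, Finset.card_univ, Fintype.card_fin,
        ← Nat.cast_smul_eq_nsmul ℝ, smul_smul, mul_inv_cancel₀ hT', one_smul, sub_self]
  have hsum0 : ∑ t, A.mulVec (f t - fbar f) = 0 := by
    have h := (map_sum A.mulVecLin (fun t => f t - fbar f) Finset.univ).symm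
    simp only [Matrix.mulVecLin_apply] at h
    rw [h, hcenter, Matrix.mulVec_zero]
  -- the covariance identity
  have hcov : A * Mff f * Aᵀ = (T : ℝ)⁻¹ • ∑ t, Matrix.of
      (fun a b => A.mulVec (f t - fbar f) a * A.mulVec (f t - fbar f) b) := by
    rw [Mff, Matrix.mul_smul, Matrix.smul_mul, Matrix.mul_sum, Matrix.sum_mul]
    congr 1
    refine Finset.sum_congr rfl fun t _ => ?_
    exact outer_conj A (f t - fbar f)
  -- block decomposition of the sample covariance
  set N : Matrix (Fin r₁ ⊕ Fin r₂) (Fin r₁ ⊕ Fin r₂) ℝ := (Mff f).submatrix ⇑e ⇑e with hNdef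
  set N₁₂ : Matrix (Fin r₁) (Fin r₂) ℝ :=
    (Mff f).submatrix (Fin.castAdd r₂) (Fin.natAdd r₁) with hN12def
  set N₂₂ : Matrix (Fin r₂) (Fin r₂) ℝ :=
    (Mff f).submatrix (Fin.natAdd r₁) (Fin.natAdd r₁) with hN22def
  have hN : N = Matrix.fromBlocks (Mgg f) N₁₂ (Mhg f) N₂₂ := by
    ext i j
    cases i <;> cases j <;>
      simp [hNdef, Mgg, Mhg, hN12def, hN22def, hedef]
  have hN12T : (Mhg f)ᵀ = N₁₂ := by
    ext a b
    simp [Mhg, hN12def, hMffSym]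
  have hABA : A * Mff f * Aᵀ = (B * N * Bᵀ).submatrix ⇑e.symm ⇑e.symm := by
    have hMffN : Mff f = N.submatrix ⇑e.symm ⇑e.symm := by
      rw [hNdef, Matrix.submatrix_submatrix]
      simp
    rw [hAdef, hMffN, Matrix.transpose_submatrix,
      Matrix.submatrix_mul_equiv B N _ e.symm _,
      Matrix.submatrix_mul_equiv (B * N) Bᵀ _ e.symm _]
  -- the two relevant blocks of B * N * Bᵀ
  have h11 : P * Mgg f * Pᵀ = 1 := by
    have hPt : Pᵀ = S⁻¹ * U := by
      rw [hPdef, Matrix.transpose_mul, hSinvT, Matrix.transpose_transpose]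
    rw [hPt, ← hS2, hPdef]
    calc Uᵀ * S⁻¹ * (S * S) * (S⁻¹ * U)
        = Uᵀ * ((S⁻¹ * S) * (S * S⁻¹)) * U := by simp only [Matrix.mul_assoc]
      _ = 1 := by rw [hS'S, Matrix.one_mul, hSS', Matrix.mul_one, hU'U]
  have h12 : P * Mgg f * Qᵀ + P * N₁₂ = 0 := by
    have hQt : Qᵀ = -((Mgg f)⁻¹ * N₁₂) := by
      rw [hQdef, Matrix.transpose_neg, Matrix.transpose_mul, Matrix.transpose_nonsing_inv,
        hMggSym, hN12T]
    rw [hQt, Matrix.mul_neg, Matrix.mul_assoc P (Mgg f),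
      ← Matrix.mul_assoc (Mgg f) ((Mgg f)⁻¹) N₁₂, hGG', Matrix.one_mul, neg_add_cancel]
  have hBNB11 : (B * N * Bᵀ).toBlocks₁₁ = 1 := by
    rw [hN, hBdef, Matrix.fromBlocks_transpose, Matrix.fromBlocks_multiply,
      Matrix.fromBlocks_multiply, Matrix.toBlocks_fromBlocks₁₁]
    simp only [Matrix.zero_mul, Matrix.mul_zero, add_zero, zero_add, Matrix.transpose_zero,
      Matrix.mul_one, Matrix.one_mul]
    rw [h11]
  have hBNB12 : (B * N * Bᵀ).toBlocks₁₂ = 0 := by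
    rw [hN, hBdef, Matrix.fromBlocks_transpose, Matrix.fromBlocks_multiply,
      Matrix.fromBlocks_multiply, Matrix.toBlocks_fromBlocks₁₂]
    simp only [Matrix.zero_mul, Matrix.mul_zero, add_zero, zero_add, Matrix.transpose_zero,
      Matrix.transpose_one, Matrix.mul_one, Matrix.one_mul]
    exact h12
  refine ⟨A, hdetA, ?_, ?_, ?_, ?_, ?_, ?_, ?_⟩
  · -- (i)
    intro t
    have h1 : (Γ * A⁻¹) * A = Γ := by
      rw [Matrix.mul_assoc, hAinv, hA'A, Matrix.mul_one]
    rw [Matrix.mulVec_mulVec, h1, ← Matrix.mulVec_add,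
      show fbar f + (f t - fbar f) = f t by funext x; simp only [Pi.add_apply, Pi.sub_apply]; ring]
  · -- (ii)
    intro i a
    rw [hΓrw]
    simp only [Matrix.submatrix_apply, id_eq, finSumFinEquiv_symm_apply_natAdd]
    rw [Matrix.mul_apply, Fintype.sum_sum_type]
    simp [hB'def, Matrix.fromBlocks_apply₁₂, Matrix.fromBlocks_apply₂₂, Matrix.one_apply,
      mul_ite, mul_one, mul_zero, Finset.sum_ite_eq', Matrix.submatrix_apply, hedef,
      finSumFinEquiv_apply_right]
  · -- (iii) mean of g⋆
    funext a
    simpa [Finset.sum_apply] using congrFun hsum0 (Fin.castAdd r₂ a)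
  · -- (iii) mean of h⋆
    funext a
    simpa [Finset.sum_apply] using congrFun hsum0 (Fin.natAdd r₁ a)
  · -- (iii) covariance of g⋆ is the identity
    ext a b
    have e1 : ((T : ℝ)⁻¹ • ∑ t, Matrix.of (fun a b : Fin r₁ =>
          A.mulVec (f t - fbar f) (Fin.castAdd r₂ a) *
          A.mulVec (f t - fbar f) (Fin.castAdd r₂ b))) a b
        = (A * Mff f * Aᵀ) (Fin.castAdd r₂ a) (Fin.castAdd r₂ b) := by
      rw [hcov]
      simp [Matrix.smul_apply, Matrix.sum_apply]
    rw [e1, hABA]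
    simp only [Matrix.submatrix_apply, hedef, finSumFinEquiv_symm_apply_castAdd]
    have := congrFun (congrFun hBNB11 a) b
    simpa [Matrix.toBlocks₁₁] using this
  · -- (iii) cross covariance of g⋆ and h⋆ vanishes
    ext a b
    have e1 : ((T : ℝ)⁻¹ • ∑ t, Matrix.of (fun (a : Fin r₁) (b : Fin r₂) =>
          A.mulVec (f t - fbar f) (Fin.castAdd r₂ a) *
          A.mulVec (f t - fbar f) (Fin.natAdd r₁ b))) a b
        = (A * Mff f * Aᵀ) (Fin.castAdd r₂ a) (Fin.natAdd r₁ b) := by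
      rw [hcov]
      simp [Matrix.smul_apply, Matrix.sum_apply]
    rw [e1, hABA]
    simp only [Matrix.submatrix_apply, hedef, finSumFinEquiv_symm_apply_castAdd,
      finSumFinEquiv_symm_apply_natAdd]
    have := congrFun (congrFun hBNB12 a) b
    simpa [Matrix.toBlocks₁₂] using this
  · -- (iv)
    have hcols : (Γ * A⁻¹).submatrix id (Fin.castAdd r₂)
        = Γ.submatrix id (Fin.castAdd r₂) * (S * U) + Γ.submatrix id (Fin.natAdd r₁) * R := by
      ext i a
      rw [hΓrw]
      simp only [Matrix.submatrix_apply, id_eq, finSumFinEquiv_symm_apply_castAdd]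
      rw [Matrix.mul_apply, Fintype.sum_sum_type]
      simp [hB'def, Matrix.fromBlocks_apply₁₁, Matrix.fromBlocks_apply₂₁, Matrix.add_apply,
        Matrix.mul_apply, Matrix.submatrix_apply, hedef, finSumFinEquiv_apply_left,
        finSumFinEquiv_apply_right]
    have hR : R = (Mhg f * S⁻¹) * U := by
      rw [hRdef, ← Matrix.mul_assoc, Matrix.mul_assoc (Mhg f), hGinvS]
    have hcols' : (Γ * A⁻¹).submatrix id (Fin.castAdd r₂)
        = (Γ.submatrix id (Fin.castAdd r₂) * S +
            Γ.submatrix id (Fin.natAdd r₁) * Mhg f * S⁻¹) * U := by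
      rw [hcols, hR]
      simp only [← Matrix.mul_assoc]
      rw [← Matrix.add_mul]
    refine ⟨d, hd, ?_⟩
    rw [hcols', Matrix.transpose_mul]
    have hre : (m : ℝ)⁻¹ • (Uᵀ * (Γ.submatrix id (Fin.castAdd r₂) * S +
            Γ.submatrix id (Fin.natAdd r₁) * Mhg f * S⁻¹)ᵀ) * Sg⁻¹ *
          ((Γ.submatrix id (Fin.castAdd r₂) * S +
            Γ.submatrix id (Fin.natAdd r₁) * Mhg f * S⁻¹) * U)
        = Uᵀ * ((m : ℝ)⁻¹ • (Γ.submatrix id (Fin.castAdd r₂) * S +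
            Γ.submatrix id (Fin.natAdd r₁) * Mhg f * S⁻¹)ᵀ * Sg⁻¹ *
          (Γ.submatrix id (Fin.castAdd r₂) * S +
            Γ.submatrix id (Fin.natAdd r₁) * Mhg f * S⁻¹)) * U := by
      simp only [Matrix.smul_mul, Matrix.mul_smul, Matrix.mul_assoc]
    rw [hre, hEig]
    simp only [← Matrix.mul_assoc]
    rw [hU'U, Matrix.one_mul, Matrix.mul_assoc, hU'U, Matrix.mul_one]
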